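/- (Total approximation error of TD(λ) under bounded cost manipulation.) Let P ∈ ℝ^{n×n} be row-stochastic with stationary distribution π, D = diag(π), α ∈ (0,1), λ ∈ [0,1), and let Φ ∈ ℝ^{n×K} have linearly independent columns. Define M := (1−λ) Σ_{m=0}^∞ λ^m α^{m+1} P^{m+1}, A := Φᵀ D (M − I) Φ, b(c) := Φᵀ D Σ_{m=0}^∞ (αλ)^m P^m c, Π := Φ(Φᵀ D Φ)^{-1} Φᵀ D, and J^μ := (I − α P)^{-1} ḡ. Let g̃ ∈ ℝ^n be the manipulated cost vector and η := g̃ − ḡ. If r* and r̃* satisfy A r* + b(ḡ) = 0 and A r̃* + b(g̃) = 0, then ‖Φ r̃* − J^μ‖_D ≤ (1/(1−α)) · ‖η‖_D + ((1−λα)/√((1−α)(1+α−2λα))) · ‖(Π − I) J^μ‖_D. -/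

import Mathlib

open Matrix

noncomputable def normD {n : ℕ} (pi : Fin n → ℝ) (J : Fin n → ℝ) : ℝ :=
  Real.sqrt (∑ i, pi i * (J i) ^ 2)

namespace TDaux
variable {n : ℕ}

noncomputable def embD (pi x : Fin n → ℝ) : EuclideanSpace ℝ (Fin n) :=
  WithLp.toLp 2 (fun i => Real.sqrt (pi i) * x i)

lemma normD_eq (pi x : Fin n → ℝ) (hpi : ∀ i, 0 ≤ pi i) :
    normD pi x = ‖embD pi x‖ := by
  have h : ∀ i, ‖embD pi x i‖ ^ 2 = pi i * (x i) ^ 2 := by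
    intro i
    rw [Real.norm_eq_abs, sq_abs]
    show (Real.sqrt (pi i) * x i) ^ 2 = _
    rw [mul_pow, Real.sq_sqrt (hpi i)]
  rw [EuclideanSpace.norm_eq, normD]
  congr 1
  exact (Finset.sum_congr rfl fun i _ => (h i)).symm

lemma embD_add (pi x y : Fin n → ℝ) : embD pi (x + y) = embD pi x + embD pi y := by
  ext i
  show Real.sqrt (pi i) * (x i + y i) = Real.sqrt (pi i) * x i + Real.sqrt (pi i) * y i
  ring

lemma embD_sub (pi x y : Fin n → ℝ) : embD pi (x - y) = embD pi x - embD pi y := by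
  ext i
  show Real.sqrt (pi i) * (x i - y i) = Real.sqrt (pi i) * x i - Real.sqrt (pi i) * y i
  ring

lemma embD_smul (pi x : Fin n → ℝ) (c : ℝ) : embD pi (c • x) = c • embD pi x := by
  ext i
  show Real.sqrt (pi i) * (c * x i) = c * (Real.sqrt (pi i) * x i)
  ring

lemma inner_embD (pi x y : Fin n → ℝ) (hpi : ∀ i, 0 ≤ pi i) :
    (inner ℝ (embD pi x) (embD pi y) : ℝ) = ∑ i, pi i * (x i * y i) := by
  rw [PiLp.inner_apply]
  refine Finset.sum_congr rfl fun i _ => ?_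
  show (Real.sqrt (pi i) * y i) * (starRingEnd ℝ) (Real.sqrt (pi i) * x i) = _
  rw [mul_comm (Real.sqrt (pi i) * y i), starRingEnd_apply, star_trivial,
    show Real.sqrt (pi i) * x i * (Real.sqrt (pi i) * y i)
      = (Real.sqrt (pi i) * Real.sqrt (pi i)) * (x i * y i) by ring,
    Real.mul_self_sqrt (hpi i)]

lemma normD_nonneg (pi x : Fin n → ℝ) : 0 ≤ normD pi x := Real.sqrt_nonneg _

lemma normD_sq (pi x : Fin n → ℝ) (hpi : ∀ i, 0 ≤ pi i) :
    normD pi x ^ 2 = ∑ i, pi i * (x i) ^ 2 := by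
  refine Real.sq_sqrt (Finset.sum_nonneg fun i _ => ?_)
  exact mul_nonneg (hpi i) (sq_nonneg _)

lemma normD_add_le (pi x y : Fin n → ℝ) (hpi : ∀ i, 0 ≤ pi i) :
    normD pi (x + y) ≤ normD pi x + normD pi y := by
  rw [normD_eq pi _ hpi, normD_eq pi _ hpi, normD_eq pi _ hpi, embD_add]
  exact norm_add_le _ _

lemma normD_smul (pi x : Fin n → ℝ) (c : ℝ) (hpi : ∀ i, 0 ≤ pi i) :
    normD pi (c • x) = |c| * normD pi x := by
  rw [normD_eq pi _ hpi, normD_eq pi _ hpi, embD_smul, norm_smul, Real.norm_eq_abs]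

lemma normD_neg (pi x : Fin n → ℝ) (hpi : ∀ i, 0 ≤ pi i) :
    normD pi (-x) = normD pi x := by
  have := normD_smul pi x (-1) hpi
  simpa using this

lemma normD_pythagoras (pi x y : Fin n → ℝ) (hpi : ∀ i, 0 ≤ pi i)
    (h : ∑ i, pi i * (x i * y i) = 0) :
    normD pi (x + y) ^ 2 = normD pi x ^ 2 + normD pi y ^ 2 := by
  rw [normD_eq pi _ hpi, normD_eq pi _ hpi, normD_eq pi _ hpi, embD_add,
    norm_add_sq_real, inner_embD pi x y hpi, h]
  ring


lemma pow_nonneg_entries (P : Matrix (Fin n) (Fin n) ℝ) (hP0 : ∀ i j, 0 ≤ P i j) :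
    ∀ m i j, 0 ≤ (P ^ m) i j := by
  intro m
  induction m with
  | zero => intro i j; by_cases h : i = j <;> simp [h, Matrix.one_apply]
  | succ m ih =>
    intro i j
    rw [pow_succ, Matrix.mul_apply]
    exact Finset.sum_nonneg fun k _ => mul_nonneg (ih i k) (hP0 k j)

lemma pow_row_sum (P : Matrix (Fin n) (Fin n) ℝ) (hP1 : ∀ i, ∑ j, P i j = 1) :
    ∀ m i, ∑ j, (P ^ m) i j = 1 := by
  intro m
  induction m with
  | zero => intro i; simp [Matrix.one_apply]
  | succ m ih =>
    intro i
    simp only [pow_succ, Matrix.mul_apply]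
    rw [Finset.sum_comm]
    calc ∑ k, ∑ j, (P ^ m) i k * P k j
        = ∑ k, (P ^ m) i k * ∑ j, P k j := by
          refine Finset.sum_congr rfl fun k _ => ?_; rw [Finset.mul_sum]
      _ = 1 := by simp only [hP1, mul_one]; exact ih i

lemma pow_entry_le_one (P : Matrix (Fin n) (Fin n) ℝ) (hP0 : ∀ i j, 0 ≤ P i j)
    (hP1 : ∀ i, ∑ j, P i j = 1) : ∀ m i j, (P ^ m) i j ≤ 1 := by
  intro m i j
  calc (P ^ m) i j ≤ ∑ k, (P ^ m) i k :=
        Finset.single_le_sum (fun k _ => pow_nonneg_entries P hP0 m i k) (Finset.mem_univ j)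
    _ = 1 := pow_row_sum P hP1 m i

/-- The key contraction: `‖P x‖_D ≤ ‖x‖_D` for stochastic `P` with stationary `π`. -/
lemma normD_mulVec_le (P : Matrix (Fin n) (Fin n) ℝ)
    (hP0 : ∀ i j, 0 ≤ P i j) (hP1 : ∀ i, ∑ j, P i j = 1)
    (pi : Fin n → ℝ) (hpi0 : ∀ i, 0 ≤ pi i)
    (hstat : ∀ j, ∑ i, pi i * P i j = pi j) (x : Fin n → ℝ) :
    normD pi (P.mulVec x) ≤ normD pi x := by
  unfold normD
  apply Real.sqrt_le_sqrt
  have key : ∀ i, (P.mulVec x i) ^ 2 ≤ ∑ j, P i j * (x j) ^ 2 := by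
    intro i
    have cs := Finset.sum_mul_sq_le_sq_mul_sq Finset.univ
      (fun j => Real.sqrt (P i j)) (fun j => Real.sqrt (P i j) * x j)
    have h1 : ∀ j, Real.sqrt (P i j) * (Real.sqrt (P i j) * x j) = P i j * x j := by
      intro j
      rw [← mul_assoc, Real.mul_self_sqrt (hP0 i j)]
    have h2 : ∀ j, Real.sqrt (P i j) ^ 2 = P i j := fun j => Real.sq_sqrt (hP0 i j)
    have h3 : ∀ j, (Real.sqrt (P i j) * x j) ^ 2 = P i j * x j ^ 2 := by
      intro j; rw [mul_pow, h2]
    simp only [h1, h2, h3] at cs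
    calc (P.mulVec x i) ^ 2 = (∑ j, P i j * x j) ^ 2 := by rw [Matrix.mulVec, dotProduct]
      _ ≤ (∑ j, P i j) * ∑ j, P i j * x j ^ 2 := cs
      _ = ∑ j, P i j * x j ^ 2 := by rw [hP1 i, one_mul]
  calc ∑ i, pi i * (P.mulVec x i) ^ 2
      ≤ ∑ i, pi i * ∑ j, P i j * (x j) ^ 2 :=
        Finset.sum_le_sum fun i _ => mul_le_mul_of_nonneg_left (key i) (hpi0 i)
    _ = ∑ j, (∑ i, pi i * P i j) * (x j) ^ 2 := by
        simp only [Finset.mul_sum, Finset.sum_mul]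
        rw [Finset.sum_comm]
        exact Finset.sum_congr rfl fun j _ => Finset.sum_congr rfl fun i _ => by ring
    _ = ∑ j, pi j * (x j) ^ 2 := by simp only [hstat]


/-- Summability of the geometric matrix series. -/
lemma summable_geom (P : Matrix (Fin n) (Fin n) ℝ) (hP0 : ∀ i j, 0 ≤ P i j)
    (hP1 : ∀ i, ∑ j, P i j = 1) (c : ℝ) (hc0 : 0 ≤ c) (hc1 : c < 1) :
    Summable (fun m : ℕ => c ^ m • P ^ m) := by
  refine Pi.summable.2 ?_
  intro i
  rw [Pi.summable]
  intro j
  have hgeom : Summable (fun m : ℕ => c ^ m) := summable_geometric_of_lt_one hc0 hc1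
  refine Summable.of_nonneg_of_le (fun m => ?_) (fun m => ?_) hgeom
  · exact mul_nonneg (pow_nonneg hc0 m) (pow_nonneg_entries P hP0 m i j)
  · calc c ^ m * (P ^ m) i j ≤ c ^ m * 1 :=
        mul_le_mul_of_nonneg_left (pow_entry_le_one P hP0 hP1 m i j) (pow_nonneg hc0 m)
      _ = c ^ m := mul_one _

/-- Left multiplication as a continuous linear map on matrices. -/
noncomputable def mulL (A : Matrix (Fin n) (Fin n) ℝ) :
    Matrix (Fin n) (Fin n) ℝ →L[ℝ] Matrix (Fin n) (Fin n) ℝ :=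
  (LinearMap.mulLeft ℝ A).toContinuousLinearMap

noncomputable def mulR (A : Matrix (Fin n) (Fin n) ℝ) :
    Matrix (Fin n) (Fin n) ℝ →L[ℝ] Matrix (Fin n) (Fin n) ℝ :=
  (LinearMap.mulRight ℝ A).toContinuousLinearMap

lemma mul_tsum (A : Matrix (Fin n) (Fin n) ℝ) (f : ℕ → Matrix (Fin n) (Fin n) ℝ)
    (hf : Summable f) : A * (∑' m, f m) = ∑' m, A * f m := by
  have := (hf.hasSum.mapL (mulL A)).tsum_eq
  simpa [mulL, LinearMap.mulLeft] using this.symm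

lemma tsum_mul (A : Matrix (Fin n) (Fin n) ℝ) (f : ℕ → Matrix (Fin n) (Fin n) ℝ)
    (hf : Summable f) : (∑' m, f m) * A = ∑' m, f m * A := by
  have := (hf.hasSum.mapL (mulR A)).tsum_eq
  simpa [mulR, LinearMap.mulRight] using this.symm

lemma smul_tsum (c : ℝ) (f : ℕ → Matrix (Fin n) (Fin n) ℝ)
    (hf : Summable f) : c • (∑' m, f m) = ∑' m, c • f m := by
  have := (hf.hasSum.mapL (c • (ContinuousLinearMap.id ℝ _))).tsum_eq
  simpa using this.symm

/-- `(1 - c•P) * ∑' c^m P^m = 1`. -/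
lemma geom_left_inv (P : Matrix (Fin n) (Fin n) ℝ) (hP0 : ∀ i j, 0 ≤ P i j)
    (hP1 : ∀ i, ∑ j, P i j = 1) (c : ℝ) (hc0 : 0 ≤ c) (hc1 : c < 1) :
    (1 - c • P) * (∑' m : ℕ, c ^ m • P ^ m) = 1 := by
  have hs := summable_geom P hP0 hP1 c hc0 hc1
  set f : ℕ → Matrix (Fin n) (Fin n) ℝ := fun m => c ^ m • P ^ m with hf
  have hterm : ∀ m, (1 - c • P) * f m = f m - f (m + 1) := by
    intro m
    rw [Matrix.sub_mul, Matrix.one_mul, Matrix.smul_mul, Matrix.mul_smul]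
    congr 1
    rw [smul_smul, ← pow_succ' c m, ← pow_succ']
  rw [mul_tsum _ _ hs]
  simp only [hterm]
  have hs1 : Summable (fun m => f (m + 1)) := (summable_nat_add_iff 1).2 hs
  rw [Summable.tsum_sub hs hs1]
  have h0 : ∑' m, f m = f 0 + ∑' m, f (m + 1) := Summable.tsum_eq_zero_add hs
  have : ∑' m, f (m + 1) = ∑' m, f m - f 0 := by rw [h0]; abel
  rw [this]
  simp [hf]

/-- `∑' c^m P^m * (1 - c•P) = 1`. -/
lemma geom_right_inv (P : Matrix (Fin n) (Fin n) ℝ) (hP0 : ∀ i j, 0 ≤ P i j)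
    (hP1 : ∀ i, ∑ j, P i j = 1) (c : ℝ) (hc0 : 0 ≤ c) (hc1 : c < 1) :
    (∑' m : ℕ, c ^ m • P ^ m) * (1 - c • P) = 1 := by
  have hs := summable_geom P hP0 hP1 c hc0 hc1
  set f : ℕ → Matrix (Fin n) (Fin n) ℝ := fun m => c ^ m • P ^ m with hf
  have hterm : ∀ m, f m * (1 - c • P) = f m - f (m + 1) := by
    intro m
    rw [Matrix.mul_sub, Matrix.mul_one, Matrix.mul_smul, Matrix.smul_mul]
    congr 1
    rw [smul_smul, mul_comm c, ← pow_succ c m, ← pow_succ]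
  rw [tsum_mul _ _ hs]
  simp only [hterm]
  have hs1 : Summable (fun m => f (m + 1)) := (summable_nat_add_iff 1).2 hs
  rw [Summable.tsum_sub hs hs1]
  have h0 : ∑' m, f m = f 0 + ∑' m, f (m + 1) := Summable.tsum_eq_zero_add hs
  have : ∑' m, f (m + 1) = ∑' m, f m - f 0 := by rw [h0]; abel
  rw [this]
  simp [hf]



section P4
variable {n K : ℕ}

section Proj
variable (Φ : Matrix (Fin n) (Fin K) ℝ) (pi : Fin n → ℝ)

/-- `xᵀ (Φᵀ D Φ) x = ∑ π (Φx)²`. -/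
lemma dot_gram (x : Fin K → ℝ) :
    x ⬝ᵥ (Φᵀ * Matrix.diagonal pi * Φ).mulVec x = ∑ i, pi i * (Φ.mulVec x i) ^ 2 := by
  rw [← Matrix.mulVec_mulVec, ← Matrix.mulVec_mulVec, Matrix.dotProduct_mulVec,
    Matrix.vecMul_transpose]
  simp only [Matrix.mulVec_diagonal, dotProduct]
  exact Finset.sum_congr rfl fun i _ => by ring

lemma gram_det_isUnit (hpi0 : ∀ i, 0 < pi i)
    (hΦ : LinearIndependent ℝ (fun k : Fin K => fun i : Fin n => Φ i k)) :
    IsUnit (Φᵀ * Matrix.diagonal pi * Φ).det := by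
  rw [← Matrix.isUnit_iff_isUnit_det, ← Matrix.mulVec_injective_iff_isUnit]
  set W := Φᵀ * Matrix.diagonal pi * Φ
  have hker : ∀ x, W.mulVec x = 0 → x = 0 := by
    intro x hx
    have h0 : ∑ i, pi i * (Φ.mulVec x i) ^ 2 = 0 := by
      rw [← dot_gram Φ pi x, hx, dotProduct_zero]
    have hΦx : ∀ i, Φ.mulVec x i = 0 := by
      intro i
      have hall := (Finset.sum_eq_zero_iff_of_nonneg
        (fun i _ => mul_nonneg (hpi0 i).le (sq_nonneg _))).mp h0 i (Finset.mem_univ i)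
      have := mul_eq_zero.mp hall
      rcases this with h | h
      · exact absurd h (hpi0 i).ne'
      · exact sq_eq_zero_iff.mp h
    have hsum : ∑ k, x k • (fun i => Φ i k) = (0 : Fin n → ℝ) := by
      funext i
      have h2 : (∑ k, x k • (fun i => Φ i k)) i = ∑ k, x k * Φ i k := by
        simp [Finset.sum_apply]
      have h3 : Φ.mulVec x i = ∑ k, Φ i k * x k := rfl
      have h4 : ∑ k, x k * Φ i k = Φ.mulVec x i := by
        rw [h3]; exact Finset.sum_congr rfl fun k _ => mul_comm _ _
      show (∑ k, x k • (fun i => Φ i k)) i = (0 : ℝ)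
      rw [h2, h4, hΦx i]
    funext k
    exact Fintype.linearIndependent_iff.mp hΦ x hsum k
  intro a b hab
  have : W.mulVec (a - b) = 0 := by
    rw [Matrix.mulVec_sub, hab, sub_self]
  have := hker _ this
  exact sub_eq_zero.mp this

variable (hpi0 : ∀ i, 0 < pi i)
  (hΦ : LinearIndependent ℝ (fun k : Fin K => fun i : Fin n => Φ i k))

/-- `Π Φ = Φ`. -/
lemma proj_mul_phi
    (hdet : IsUnit (Φᵀ * Matrix.diagonal pi * Φ).det) :
    (Φ * (Φᵀ * Matrix.diagonal pi * Φ)⁻¹ * Φᵀ * Matrix.diagonal pi) * Φ = Φ := by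
  set W := Φᵀ * Matrix.diagonal pi * Φ with hW
  calc (Φ * W⁻¹ * Φᵀ * Matrix.diagonal pi) * Φ
      = Φ * (W⁻¹ * W) := by rw [hW]; simp only [Matrix.mul_assoc]
    _ = Φ := by rw [Matrix.nonsing_inv_mul _ hdet, Matrix.mul_one]

/-- `Φᵀ D Π = Φᵀ D`. -/
lemma phiD_mul_proj
    (hdet : IsUnit (Φᵀ * Matrix.diagonal pi * Φ).det) :
    (Φᵀ * Matrix.diagonal pi) * (Φ * (Φᵀ * Matrix.diagonal pi * Φ)⁻¹ * Φᵀ * Matrix.diagonal pi)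
      = Φᵀ * Matrix.diagonal pi := by
  set W := Φᵀ * Matrix.diagonal pi * Φ with hW
  calc (Φᵀ * Matrix.diagonal pi) * (Φ * W⁻¹ * Φᵀ * Matrix.diagonal pi)
      = (W * W⁻¹) * (Φᵀ * Matrix.diagonal pi) := by rw [hW]; simp only [Matrix.mul_assoc]
    _ = Φᵀ * Matrix.diagonal pi := by rw [Matrix.mul_nonsing_inv _ hdet, Matrix.one_mul]

/-- orthogonality of the range of `Φ` against `ker Φᵀ D` in the weighted inner product. -/
lemma ip_phi_ker (r : Fin K → ℝ) (v : Fin n → ℝ)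
    (hv : (Φᵀ * Matrix.diagonal pi).mulVec v = 0) :
    ∑ i, pi i * (Φ.mulVec r i * v i) = 0 := by
  have h1 : ∑ i, pi i * (Φ.mulVec r i * v i) = (Φ.mulVec r) ⬝ᵥ ((Matrix.diagonal pi).mulVec v) := by
    simp only [dotProduct, Matrix.mulVec_diagonal]
    exact Finset.sum_congr rfl fun i _ => by ring
  rw [h1, ← Matrix.vecMul_transpose, ← Matrix.dotProduct_mulVec, Matrix.mulVec_mulVec, hv,
    dotProduct_zero]

end Proj
end P4

section P5
variable {n K : ℕ} (Φ : Matrix (Fin n) (Fin K) ℝ) (pi : Fin n → ℝ)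

lemma proj_mulVec_eq (v : Fin n → ℝ) :
    (Φ * (Φᵀ * Matrix.diagonal pi * Φ)⁻¹ * Φᵀ * Matrix.diagonal pi).mulVec v
      = Φ.mulVec (((Φᵀ * Matrix.diagonal pi * Φ)⁻¹ * (Φᵀ * Matrix.diagonal pi)).mulVec v) := by
  rw [Matrix.mulVec_mulVec]
  congr 1
  simp only [Matrix.mul_assoc]

lemma proj_fix (hdet : IsUnit (Φᵀ * Matrix.diagonal pi * Φ).det) (r : Fin K → ℝ) :
    (Φ * (Φᵀ * Matrix.diagonal pi * Φ)⁻¹ * Φᵀ * Matrix.diagonal pi).mulVec (Φ.mulVec r)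
      = Φ.mulVec r := by
  rw [Matrix.mulVec_mulVec, proj_mul_phi Φ pi hdet]

lemma proj_zero (v : Fin n → ℝ) (hv : (Φᵀ * Matrix.diagonal pi).mulVec v = 0) :
    (Φ * (Φᵀ * Matrix.diagonal pi * Φ)⁻¹ * Φᵀ * Matrix.diagonal pi).mulVec v = 0 := by
  rw [proj_mulVec_eq, ← Matrix.mulVec_mulVec, hv, Matrix.mulVec_zero, Matrix.mulVec_zero]

lemma proj_ker (hdet : IsUnit (Φᵀ * Matrix.diagonal pi * Φ).det) (z : Fin n → ℝ) :
    (Φᵀ * Matrix.diagonal pi).mulVec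
      ((Φ * (Φᵀ * Matrix.diagonal pi * Φ)⁻¹ * Φᵀ * Matrix.diagonal pi).mulVec z - z) = 0 := by
  rw [Matrix.mulVec_sub, Matrix.mulVec_mulVec, phiD_mul_proj Φ pi hdet, sub_self]

lemma ip_proj_ker (v w : Fin n → ℝ)
    (hw : (Φᵀ * Matrix.diagonal pi).mulVec w = 0) :
    ∑ i, pi i * (((Φ * (Φᵀ * Matrix.diagonal pi * Φ)⁻¹ * Φᵀ * Matrix.diagonal pi).mulVec v) i
      * w i) = 0 := by
  rw [proj_mulVec_eq]
  exact ip_phi_ker Φ pi _ w hw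

lemma proj_nonexpansive (hpi0 : ∀ i, 0 ≤ pi i)
    (hdet : IsUnit (Φᵀ * Matrix.diagonal pi * Φ).det) (z : Fin n → ℝ) :
    normD pi ((Φ * (Φᵀ * Matrix.diagonal pi * Φ)⁻¹ * Φᵀ * Matrix.diagonal pi).mulVec z)
      ≤ normD pi z := by
  set Pr := Φ * (Φᵀ * Matrix.diagonal pi * Φ)⁻¹ * Φᵀ * Matrix.diagonal pi with hPr
  set u := Pr.mulVec z with hu
  set w := z - u with hw
  have hker : (Φᵀ * Matrix.diagonal pi).mulVec w = 0 := by
    have h1 := proj_ker Φ pi hdet z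
    have : (Φᵀ * Matrix.diagonal pi).mulVec w
        = -((Φᵀ * Matrix.diagonal pi).mulVec (u - z)) := by
      rw [← Matrix.mulVec_neg, neg_sub]
    rw [this, h1, neg_zero]
  have hip := ip_proj_ker Φ pi z w hker
  have hpy := normD_pythagoras pi u w hpi0 hip
  have huw : u + w = z := by rw [hw]; abel
  rw [huw] at hpy
  nlinarith [normD_nonneg pi u, normD_nonneg pi z, sq_nonneg (normD pi w)]

end P5

end TDaux


open TDaux in
set_option maxHeartbeats 1000000 in
/-- Total approximation error of TD(λ) under bounded cost manipulation: with
`M = (1−λ)∑ λ^m α^{m+1} P^{m+1}`, `A = Φᵀ D (M − I) Φ`, `b(c) = Φᵀ D ∑ (αλ)^m P^m c`,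
`Π = Φ(Φᵀ D Φ)⁻¹ Φᵀ D`, `J^μ = (I − αP)⁻¹ ḡ` and `η = g̃ − ḡ`, if `A r* + b(ḡ) = 0` and
`A r̃* + b(g̃) = 0` then
`‖Φ r̃* − J^μ‖_D ≤ (1/(1−α))‖η‖_D + ((1−λα)/√((1−α)(1+α−2λα))) ‖(Π − I) J^μ‖_D`. -/
theorem TD_total_approximation_error_bound
    {n K : ℕ} (P : Matrix (Fin n) (Fin n) ℝ)
    (hP0 : ∀ i j, 0 ≤ P i j) (hP1 : ∀ i, ∑ j, P i j = 1)
    (pi : Fin n → ℝ) (hpi0 : ∀ i, 0 < pi i) (hpi1 : ∑ i, pi i = 1)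
    (hstat : ∀ j, ∑ i, pi i * P i j = pi j)
    (α lam : ℝ) (hα0 : 0 < α) (hα1 : α < 1) (hlam0 : 0 ≤ lam) (hlam1 : lam < 1)
    (Φ : Matrix (Fin n) (Fin K) ℝ)
    (hΦ : LinearIndependent ℝ (fun k : Fin K => fun i : Fin n => Φ i k))
    (D : Matrix (Fin n) (Fin n) ℝ) (hD : D = Matrix.diagonal pi)
    (M : Matrix (Fin n) (Fin n) ℝ)
    (hM : M = (1 - lam) • ∑' m : ℕ, (lam ^ m * α ^ (m + 1)) • P ^ (m + 1))
    (A : Matrix (Fin K) (Fin K) ℝ) (hA : A = Φᵀ * D * (M - 1) * Φ)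
    (b : (Fin n → ℝ) → (Fin K → ℝ))
    (hb : ∀ c, b c = (Φᵀ * D * ∑' m : ℕ, (α * lam) ^ m • P ^ m).mulVec c)
    (Pr : Matrix (Fin n) (Fin n) ℝ) (hPr : Pr = Φ * (Φᵀ * D * Φ)⁻¹ * Φᵀ * D)
    (gbar gt η : Fin n → ℝ) (hη : η = gt - gbar)
    (Jμ : Fin n → ℝ) (hJμ : Jμ = ((1 - α • P)⁻¹).mulVec gbar)
    (rstar rtstar : Fin K → ℝ)
    (hrstar : A.mulVec rstar + b gbar = 0)
    (hrtstar : A.mulVec rtstar + b gt = 0) :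
    normD pi (Φ.mulVec rtstar - Jμ) ≤
      (1 / (1 - α)) * normD pi η +
        ((1 - lam * α) / Real.sqrt ((1 - α) * (1 + α - 2 * lam * α))) *
          normD pi ((Pr - 1).mulVec Jμ) := by
  subst hD
  have hpi : ∀ i, 0 ≤ pi i := fun i => (hpi0 i).le
  have hal0 : 0 ≤ α * lam := mul_nonneg hα0.le hlam0
  have hal1 : α * lam < 1 := by nlinarith
  have h1al : 0 < 1 - α * lam := by linarith
  have h1α : 0 < 1 - α := by linarith
  set S : Matrix (Fin n) (Fin n) ℝ := ∑' m : ℕ, (α * lam) ^ m • P ^ m with hS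
  have hsum : Summable (fun m : ℕ => (α * lam) ^ m • P ^ m) :=
    summable_geom P hP0 hP1 _ hal0 hal1
  have hSl : (1 - (α * lam) • P) * S = 1 := geom_left_inv P hP0 hP1 _ hal0 hal1
  have hSr : S * (1 - (α * lam) • P) = 1 := geom_right_inv P hP0 hP1 _ hal0 hal1
  have hPS : P * S = S * P := by
    rw [hS, mul_tsum _ _ hsum, tsum_mul _ _ hsum]
    refine tsum_congr fun m => ?_
    rw [Matrix.mul_smul, Matrix.smul_mul, ← pow_succ', ← pow_succ]
  have hg : Summable (fun m : ℕ => P * ((α * lam) ^ m • P ^ m)) := by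
    have h := hsum.map (mulL P).toLinearMap.toAddMonoidHom (mulL P).continuous
    exact h
  have hM' : M = ((1 - lam) * α) • (P * S) := by
    have h1 : α • (P * S) = ∑' m : ℕ, (lam ^ m * α ^ (m + 1)) • P ^ (m + 1) := by
      rw [hS, mul_tsum _ _ hsum, smul_tsum _ _ hg]
      refine tsum_congr fun m => ?_
      rw [Matrix.mul_smul, smul_smul, ← pow_succ']
      congr 1
      rw [mul_pow]; ring
    rw [hM, ← h1, smul_smul]
  have hkey : M + S * (1 - α • P) = 1 := by
    have e2 : S * (1 - α • P) = S - α • (S * P) := by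
      rw [Matrix.mul_sub, Matrix.mul_one, Matrix.mul_smul]
    have e1 : S * (1 - (α * lam) • P) = S - (α * lam) • (S * P) := by
      rw [Matrix.mul_sub, Matrix.mul_one, Matrix.mul_smul]
    have hco : ((1 - lam) * α : ℝ) = α - α * lam := by ring
    rw [hM', e2, hPS, hco, sub_smul]
    have h3 : α • (S * P) - (α * lam) • (S * P) + (S - α • (S * P))
        = S - (α * lam) • (S * P) := by abel
    rw [h3, ← e1, hSr]
  -- J^μ facts
  have hGl : (1 - α • P) * (∑' m : ℕ, α ^ m • P ^ m) = 1 :=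
    geom_left_inv P hP0 hP1 α hα0.le hα1
  have hJ : (1 - α • P).mulVec Jμ = gbar := by
    rw [hJμ, Matrix.inv_eq_right_inv hGl, Matrix.mulVec_mulVec, hGl, Matrix.one_mulVec]
  have hTJ : M.mulVec Jμ + S.mulVec gbar = Jμ := by
    rw [← hJ, Matrix.mulVec_mulVec, ← Matrix.add_mulVec, hkey, Matrix.one_mulVec]
  have hdet : IsUnit (Φᵀ * Matrix.diagonal pi * Φ).det := gram_det_isUnit Φ pi hpi0 hΦ
  -- fixed point equations
  have hfix : ∀ (r : Fin K → ℝ) (c : Fin n → ℝ), A.mulVec r + b c = 0 →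
      Pr.mulVec (M.mulVec (Φ.mulVec r) + S.mulVec c) = Φ.mulVec r := by
    intro r c h
    have hAr : A.mulVec r
        = (Φᵀ * Matrix.diagonal pi).mulVec ((M - 1).mulVec (Φ.mulVec r)) := by
      rw [Matrix.mulVec_mulVec, Matrix.mulVec_mulVec, hA]
    have hbc : b c = (Φᵀ * Matrix.diagonal pi).mulVec (S.mulVec c) := by
      rw [hb c, Matrix.mulVec_mulVec]
    rw [hAr, hbc, ← Matrix.mulVec_add] at h
    have h3 : (M - 1).mulVec (Φ.mulVec r) + S.mulVec c
        = (M.mulVec (Φ.mulVec r) + S.mulVec c) - Φ.mulVec r := by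
      rw [Matrix.sub_mulVec, Matrix.one_mulVec]; abel
    have h2 : Pr.mulVec ((M.mulVec (Φ.mulVec r) + S.mulVec c) - Φ.mulVec r) = 0 := by
      rw [hPr]
      exact proj_zero Φ pi _ (by rw [← h3]; exact h)
    rw [Matrix.mulVec_sub] at h2
    have h4 : Pr.mulVec (Φ.mulVec r) = Φ.mulVec r := by
      rw [hPr]; exact proj_fix Φ pi hdet r
    rw [h4] at h2
    exact sub_eq_zero.mp h2
  set u := Φ.mulVec rstar with hudef
  set ut := Φ.mulVec rtstar with hutdef
  have hu : Pr.mulVec (M.mulVec u + S.mulVec gbar) = u := hfix rstar gbar hrstar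
  have hut : Pr.mulVec (M.mulVec ut + S.mulVec gt) = ut := hfix rtstar gt hrtstar
  set e := ut - u with he
  set v := u - Jμ with hv
  set w := (Pr - 1).mulVec Jμ with hwdef
  -- decompositions
  have hedec : e = Pr.mulVec (M.mulVec e) + Pr.mulVec (S.mulVec η) := by
    have hdiff : (M.mulVec ut + S.mulVec gt) - (M.mulVec u + S.mulVec gbar)
        = M.mulVec e + S.mulVec η := by
      rw [he, hη, Matrix.mulVec_sub, Matrix.mulVec_sub]; abel
    calc e = Pr.mulVec (M.mulVec ut + S.mulVec gt)
          - Pr.mulVec (M.mulVec u + S.mulVec gbar) := by rw [hu, hut]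
      _ = Pr.mulVec ((M.mulVec ut + S.mulVec gt) - (M.mulVec u + S.mulVec gbar)) := by
          rw [Matrix.mulVec_sub]
      _ = Pr.mulVec (M.mulVec e + S.mulVec η) := by rw [hdiff]
      _ = Pr.mulVec (M.mulVec e) + Pr.mulVec (S.mulVec η) := by rw [Matrix.mulVec_add]
  have hvdec : v = Pr.mulVec (M.mulVec v) + w := by
    have h5 : Pr.mulVec Jμ = Pr.mulVec (M.mulVec Jμ + S.mulVec gbar) := by rw [hTJ]
    have h6 : u - Pr.mulVec Jμ = Pr.mulVec (M.mulVec v) := by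
      have h6a : M.mulVec v = (M.mulVec u + S.mulVec gbar) - (M.mulVec Jμ + S.mulVec gbar) := by
        rw [hv, Matrix.mulVec_sub]; abel
      rw [h6a, Matrix.mulVec_sub, hu, ← h5]
    have h7 : w = Pr.mulVec Jμ - Jμ := by
      rw [hwdef, Matrix.sub_mulVec, Matrix.one_mulVec]
    calc v = (u - Pr.mulVec Jμ) + (Pr.mulVec Jμ - Jμ) := by rw [hv]; abel
      _ = Pr.mulVec (M.mulVec v) + w := by rw [h6, h7]
  -- norm bounds
  have hSb : ∀ x, (1 - α * lam) * normD pi (S.mulVec x) ≤ normD pi x := by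
    intro x
    have h8 : S = 1 + (α * lam) • (P * S) := by
      have h9 := hSl
      rw [Matrix.sub_mul, Matrix.one_mul, Matrix.smul_mul, sub_eq_iff_eq_add] at h9
      exact h9
    have hid : S.mulVec x = x + (α * lam) • (P.mulVec (S.mulVec x)) := by
      calc S.mulVec x = (1 + (α * lam) • (P * S)).mulVec x := by rw [← h8]
        _ = x + (α * lam) • (P.mulVec (S.mulVec x)) := by
            rw [Matrix.add_mulVec, Matrix.one_mulVec, Matrix.smul_mulVec,
              ← Matrix.mulVec_mulVec]
    have t1 : normD pi (S.mulVec x)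
        ≤ normD pi x + (α * lam) * normD pi (P.mulVec (S.mulVec x)) := by
      calc normD pi (S.mulVec x)
          = normD pi (x + (α * lam) • (P.mulVec (S.mulVec x))) := by rw [← hid]
        _ ≤ normD pi x + normD pi ((α * lam) • (P.mulVec (S.mulVec x))) :=
            normD_add_le pi _ _ hpi
        _ = normD pi x + |α * lam| * normD pi (P.mulVec (S.mulVec x)) := by
            rw [normD_smul pi _ _ hpi]
        _ = normD pi x + (α * lam) * normD pi (P.mulVec (S.mulVec x)) := by
            rw [abs_of_nonneg hal0]
    have t2 : normD pi (P.mulVec (S.mulVec x)) ≤ normD pi (S.mulVec x) :=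
      normD_mulVec_le P hP0 hP1 pi hpi hstat _
    nlinarith [normD_nonneg pi (S.mulVec x)]
  have hMb : ∀ x, (1 - α * lam) * normD pi (M.mulVec x) ≤ ((1 - lam) * α) * normD pi x := by
    intro x
    have hMx : M.mulVec x = ((1 - lam) * α) • (P.mulVec (S.mulVec x)) := by
      rw [hM', Matrix.smul_mulVec, ← Matrix.mulVec_mulVec]
    have h1l : (0:ℝ) ≤ (1 - lam) * α := mul_nonneg (by linarith) hα0.le
    have t1 : normD pi (M.mulVec x) = ((1 - lam) * α) * normD pi (P.mulVec (S.mulVec x)) := by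
      rw [hMx, normD_smul pi _ _ hpi, abs_of_nonneg h1l]
    have t2 : normD pi (P.mulVec (S.mulVec x)) ≤ normD pi (S.mulVec x) :=
      normD_mulVec_le P hP0 hP1 pi hpi hstat _
    have t3 := hSb x
    have m1 : (1 - α * lam) * normD pi (P.mulVec (S.mulVec x)) ≤ normD pi x :=
      le_trans (mul_le_mul_of_nonneg_left t2 h1al.le) t3
    have m2 := mul_le_mul_of_nonneg_left m1 h1l
    rw [t1]
    nlinarith [m2]
  have hPrb : ∀ z, normD pi (Pr.mulVec z) ≤ normD pi z := by
    intro z; rw [hPr]; exact proj_nonexpansive Φ pi hpi hdet z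
  -- bound 1
  have hb1 : (1 - α) * normD pi e ≤ normD pi η := by
    have t1 : normD pi e
        ≤ normD pi (Pr.mulVec (M.mulVec e)) + normD pi (Pr.mulVec (S.mulVec η)) := by
      conv_lhs => rw [hedec]
      exact normD_add_le pi _ _ hpi
    have t2 : normD pi (Pr.mulVec (M.mulVec e)) ≤ normD pi (M.mulVec e) := hPrb _
    have t4 : normD pi (Pr.mulVec (S.mulVec η)) ≤ normD pi (S.mulVec η) := hPrb _
    have t3 := hMb e
    have t5 := hSb η
    have c0 : (0:ℝ) ≤ 1 - α * lam := h1al.le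
    have m1 := mul_le_mul_of_nonneg_left t1 c0
    have m2 := mul_le_mul_of_nonneg_left t2 c0
    have m4 := mul_le_mul_of_nonneg_left t4 c0
    nlinarith [m1, m2, m4, t3, t5]
  -- bound 2
  have hwker : (Φᵀ * Matrix.diagonal pi).mulVec w = 0 := by
    rw [hwdef, Matrix.sub_mulVec, Matrix.one_mulVec, hPr]
    exact proj_ker Φ pi hdet Jμ
  have hip : ∑ i, pi i * ((Pr.mulVec (M.mulVec v)) i * w i) = 0 := by
    rw [hPr]
    exact ip_proj_ker Φ pi _ w hwker
  have hpy : normD pi v ^ 2 = normD pi (Pr.mulVec (M.mulVec v)) ^ 2 + normD pi w ^ 2 := by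
    have h10 := normD_pythagoras pi (Pr.mulVec (M.mulVec v)) w hpi hip
    rw [← hvdec] at h10
    exact h10
  set Δ := (1 - α) * (1 + α - 2 * lam * α) with hΔ
  have hΔpos : 0 < Δ := by rw [hΔ]; apply mul_pos h1α; nlinarith
  have t2 : normD pi (Pr.mulVec (M.mulVec v)) ≤ normD pi (M.mulVec v) := hPrb _
  have t3 := hMb v
  have hsq : Δ * normD pi v ^ 2 ≤ (1 - α * lam) ^ 2 * normD pi w ^ 2 := by
    have hΔid : Δ = (1 - α * lam) ^ 2 - ((1 - lam) * α) ^ 2 := by rw [hΔ]; ring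
    have c0 : (0:ℝ) ≤ 1 - α * lam := h1al.le
    have hchain : (1 - α * lam) * normD pi (Pr.mulVec (M.mulVec v))
        ≤ ((1 - lam) * α) * normD pi v := by
      calc (1 - α * lam) * normD pi (Pr.mulVec (M.mulVec v))
          ≤ (1 - α * lam) * normD pi (M.mulVec v) := mul_le_mul_of_nonneg_left t2 c0
        _ ≤ ((1 - lam) * α) * normD pi v := t3
    have hnn : 0 ≤ (1 - α * lam) * normD pi (Pr.mulVec (M.mulVec v)) :=
      mul_nonneg c0 (normD_nonneg _ _)
    have hsq1 : ((1 - α * lam) * normD pi (Pr.mulVec (M.mulVec v))) ^ 2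
        ≤ (((1 - lam) * α) * normD pi v) ^ 2 := by
      have hrnn : 0 ≤ ((1 - lam) * α) * normD pi v := le_trans hnn hchain
      nlinarith
    have hpy' : (1 - α * lam) ^ 2 * normD pi v ^ 2
        = (1 - α * lam) ^ 2 * (normD pi (Pr.mulVec (M.mulVec v)) ^ 2 + normD pi w ^ 2) := by
      rw [hpy]
    rw [hΔid]
    nlinarith [hpy', hsq1]
  have hb2 : normD pi v ≤ ((1 - lam * α) / Real.sqrt Δ) * normD pi w := by
    have hsΔ : 0 < Real.sqrt Δ := Real.sqrt_pos.mpr hΔpos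
    have hss : Real.sqrt Δ ^ 2 = Δ := Real.sq_sqrt hΔpos.le
    have h1 : (Real.sqrt Δ * normD pi v) ^ 2 ≤ ((1 - α * lam) * normD pi w) ^ 2 := by
      rw [mul_pow, mul_pow, hss]
      exact hsq
    have h2 : Real.sqrt Δ * normD pi v ≤ (1 - α * lam) * normD pi w := by
      have ha : 0 ≤ Real.sqrt Δ * normD pi v := mul_nonneg hsΔ.le (normD_nonneg _ _)
      have hb' : 0 ≤ (1 - α * lam) * normD pi w := mul_nonneg h1al.le (normD_nonneg _ _)
      nlinarith
    rw [div_mul_eq_mul_div, le_div_iff₀ hsΔ]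
    calc normD pi v * Real.sqrt Δ = Real.sqrt Δ * normD pi v := mul_comm _ _
      _ ≤ (1 - α * lam) * normD pi w := h2
      _ = (1 - lam * α) * normD pi w := by ring
  -- final assembly
  have hb1' : normD pi e ≤ (1 / (1 - α)) * normD pi η := by
    rw [div_mul_eq_mul_div, one_mul, le_div_iff₀ h1α]
    calc normD pi e * (1 - α) = (1 - α) * normD pi e := mul_comm _ _
      _ ≤ normD pi η := hb1
  have hfin : ut - Jμ = e + v := by rw [he, hv]; abel
  calc normD pi (ut - Jμ) = normD pi (e + v) := by rw [hfin]
    _ ≤ normD pi e + normD pi v := normD_add_le pi _ _ hpi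
    _ ≤ (1 / (1 - α)) * normD pi η + ((1 - lam * α) / Real.sqrt Δ) * normD pi w :=
        add_le_add hb1' hb2
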